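/- In the merge branch evaluation of a nested justification system whose nesting structure forms a tree, for every infinite branch b there is a unique system JS' among the root and its descendants such that (a) b contains infinitely many occurrences of facts defined locally in JS' and (b) no ancestor of JS' satisfies (a). Uniqueness holds because if a branch has infinitely many occurrences of facts defined locally in two incomparable systems, it must also pass infinitely often through facts of a common ancestor. -/

import Mathlib

private lemma pigeonhole_fiber {σ : Type*} [Fintype σ] {A : Set ℕ} (hA : A.Infinite)
    (f : ℕ → σ) : ∃ u : σ, {k ∈ A | f k = u}.Infinite := by
  by_contra h
  push_neg at h
  have h : ∀ u, {k ∈ A | f k = u}.Finite := fun u => by simpa using h u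
  have hsub : A ⊆ ⋃ u ∈ (Finset.univ : Finset σ), {k ∈ A | f k = u} := by
    intro k hk; simp [hk]
  exact hA (((Finset.univ : Finset σ).finite_toSet.biUnion fun u _ => h u).subset hsub)

/-- In the merge branch evaluation of a nested justification system whose
nesting structure forms a tree, for every infinite branch `b` there is a unique
system `s` (among the root and its descendants, ordered by the ancestor
relation `≤`, where ancestors of any node form a chain and there is a root
below everything) such that (a) `b` contains infinitely many occurrences of
facts defined locally in `s`, and (b) no strict ancestor of `s` satisfies (a). -/
theorem merge_unique_system {α σ : Type*} [Fintype σ] [PartialOrder σ]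
    (htree : ∀ s : σ, IsChain (· ≤ ·) {t | t ≤ s})
    (hroot : ∃ r : σ, ∀ s, r ≤ s)
    (loc : α → σ)        -- the system in which each fact is locally defined
    (b : ℕ → α)
    -- consecutive facts are defined in ancestor-or-descendant systems
    (hstep : ∀ k, loc (b k) ≤ loc (b (k + 1)) ∨ loc (b (k + 1)) ≤ loc (b k)) :
    ∃! s : σ, {k : ℕ | loc (b k) = s}.Infinite ∧
      ∀ s', s' < s → ¬ {k : ℕ | loc (b k) = s'}.Infinite := by
  -- key lemma: between any i ≤ j the branch passes through a common ancestor
  have key : ∀ i j, i ≤ j → ∃ m, i ≤ m ∧ m ≤ j ∧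
      loc (b m) ≤ loc (b i) ∧ loc (b m) ≤ loc (b j) := by
    intro i j hij
    induction j, hij using Nat.le_induction with
    | base => exact ⟨i, le_rfl, le_rfl, le_rfl, le_rfl⟩
    | succ j hij ih =>
      obtain ⟨m, him, hmj, hmi, hml⟩ := ih
      rcases hstep j with h1 | h1
      · exact ⟨m, him, hmj.trans (Nat.le_succ j), hmi, hml.trans h1⟩
      · -- both loc (b m) and loc (b (j+1)) are ≤ loc (b j), hence comparable
        by_cases hEq : loc (b m) = loc (b (j + 1))
        · exact ⟨m, him, hmj.trans (Nat.le_succ j), hmi, le_of_eq hEq⟩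
        · rcases htree (loc (b j)) hml h1 hEq with h2 | h2
          · exact ⟨m, him, hmj.trans (Nat.le_succ j), hmi, h2⟩
          · exact ⟨j + 1, him.trans (hmj.trans (Nat.le_succ j)), le_rfl,
              h2.trans hmi, le_rfl⟩
  -- the set of systems occurring infinitely often
  set S : Set σ := {s : σ | {k : ℕ | loc (b k) = s}.Infinite} with hSdef
  have hSne : S.Nonempty := by
    obtain ⟨u, hu⟩ := pigeonhole_fiber Set.infinite_univ (fun k => loc (b k))
    exact ⟨u, hu.mono fun k hk => hk.2⟩
  obtain ⟨s, hsS, hsmin⟩ : ∃ a ∈ S, ∀ a' ∈ S, id a' ≤ id a → id a = id a' := by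
    obtain ⟨a, ha⟩ := (Set.toFinite S).exists_minimal hSne
    exact ⟨a, ha.1, fun a' h1 h2 => (ha.eq_of_le h1 h2).symm⟩
  have hbs : ∀ s', s' < s → ¬ {k : ℕ | loc (b k) = s'}.Infinite := by
    intro s' hs' hinf
    exact hs'.ne' (hsmin s' hinf hs'.le)
  refine ⟨s, ⟨hsS, hbs⟩, ?_⟩
  rintro t ⟨htinf, htmin⟩
  rcases eq_or_ne t s with rfl | hne
  · rfl
  exfalso
  have hts : ¬ t ≤ s := fun h => hbs t (h.lt_of_ne hne) htinf
  have hst : ¬ s ≤ t := fun h => htmin s (h.lt_of_ne (Ne.symm hne)) hsS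
  -- the branch passes through a common ancestor of s and t infinitely often
  have hA : {m : ℕ | loc (b m) ≤ s ∧ loc (b m) ≤ t}.Infinite := by
    apply Set.infinite_of_forall_exists_gt
    intro n
    obtain ⟨i, hiS, hni⟩ := hsS.exists_gt n
    obtain ⟨j, hjT, hij⟩ := htinf.exists_gt i
    obtain ⟨m, him, hmj, hm1, hm2⟩ := key i j hij.le
    exact ⟨m, ⟨hiS ▸ hm1, hjT ▸ hm2⟩, lt_of_lt_of_le hni him⟩
  obtain ⟨u, hu⟩ := pigeonhole_fiber hA (fun k => loc (b k))
  obtain ⟨k, hk⟩ := hu.nonempty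
  have hus : u ≤ s := hk.2 ▸ hk.1.1
  have hut : u ≤ t := hk.2 ▸ hk.1.2
  have hlt : u < s := hus.lt_of_ne (fun h => hst (h ▸ hut))
  exact hbs u hlt (hu.mono fun k hk => hk.2)
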